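/- Let u^+ ∈ S_k^+ ∩ U_m and u_0 ∈ N_k with u_0 ∉ N_k ∩ U_m. Then (u^+)⁻¹ u_0 u^+ ∈ N_k and (u^+)⁻¹ u_0 u^+ ∉ N_k ∩ U_m. In other words, conjugation by elements of S_k^+ ∩ U_m preserves the complement N_k \ (N_k ∩ U_m). -/
import Mathlib


open Matrix

noncomputable section

def Jmat (F : Type*) [Field F] (n : ℕ) : Matrix (Fin n) (Fin n) F :=
  Matrix.of fun i j => if (i : ℕ) + (j : ℕ) + 1 = n then 1 else 0

def inSO (F : Type*) [Field F] (n : ℕ) (g : Matrix (Fin n) (Fin n) F) : Prop :=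
  g.det = 1 ∧ gᵀ * Jmat F n * g = Jmat F n

def pPow (F : Type*) [Field F] (v : F → ℤ) (k : ℤ) : Set F :=
  {x | x = 0 ∨ (x ≠ 0 ∧ k ≤ v x)}

def inKm (F : Type*) [Field F] (v : F → ℤ) (l m : ℕ)
    (g : Matrix (Fin (2*l)) (Fin (2*l)) F) : Prop :=
  inSO F (2*l) g ∧ ∀ i j : Fin (2*l), (g - 1) i j ∈ pPow F v (m : ℤ)

def emDiag (F : Type*) [Field F] (ϖ : F) (l m : ℕ) : Matrix (Fin (2*l)) (Fin (2*l)) F :=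
  Matrix.diagonal fun i =>
    if (i:ℕ) < l then ϖ ^ (-(2*(m:ℤ)*((l:ℤ)-1-((i:ℕ):ℤ))))
    else ϖ ^ (2*(m:ℤ)*(((i:ℕ):ℤ)-(l:ℤ)))

def emDiagInv (F : Type*) [Field F] (ϖ : F) (l m : ℕ) : Matrix (Fin (2*l)) (Fin (2*l)) F :=
  Matrix.diagonal fun i =>
    if (i:ℕ) < l then ϖ ^ (2*(m:ℤ)*((l:ℤ)-1-((i:ℕ):ℤ)))
    else ϖ ^ (-(2*(m:ℤ)*(((i:ℕ):ℤ)-(l:ℤ))))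

def inHm (F : Type*) [Field F] (v : F → ℤ) (ϖ : F) (l m : ℕ)
    (g : Matrix (Fin (2*l)) (Fin (2*l)) F) : Prop :=
  ∃ kk, inKm F v l m kk ∧ g = emDiag F ϖ l m * kk * emDiagInv F ϖ l m

/-- Upper triangular unipotent. -/
def isUUT (F : Type*) [Field F] (N : ℕ) (g : Matrix (Fin N) (Fin N) F) : Prop :=
  (∀ i, g i i = 1) ∧ ∀ i j : Fin N, (j:ℕ) < (i:ℕ) → g i j = 0

/-- The maximal unipotent subgroup `U = U_{SO_{2l}}`. -/
def inU (F : Type*) [Field F] (l : ℕ) (g : Matrix (Fin (2*l)) (Fin (2*l)) F) : Prop :=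
  inSO F (2*l) g ∧ isUUT F (2*l) g

/-- `U_m = U ∩ H_m`. -/
def inUm (F : Type*) [Field F] (v : F → ℤ) (ϖ : F) (l m : ℕ)
    (g : Matrix (Fin (2*l)) (Fin (2*l)) F) : Prop :=
  inU F l g ∧ inHm F v ϖ l m g

/-- The unipotent radical `N_k` of the standard maximal parabolic `P_k = M_k N_k`
with Levi `M_k ≅ GL_k × SO_{2(l-k)}`. -/
def inNk (F : Type*) [Field F] (l k : ℕ) (g : Matrix (Fin (2*l)) (Fin (2*l)) F) : Prop :=
  inSO F (2*l) g ∧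
  ∀ i j : Fin (2*l),
    ¬(((i:ℕ) < k ∧ k ≤ (j:ℕ)) ∨ ((i:ℕ) < 2*l-k ∧ 2*l-k ≤ (j:ℕ))) →
      g i j = (if i = j then 1 else 0)

/-- Block index for the partition `(k, 2l-2k, k)`. -/
def blk3 (l k x : ℕ) : ℕ := if x < k then 0 else if x < 2*l-k then 1 else 2

/-- `S_k^+ = {diag(u_1, u_2, u_1*) : u_1 ∈ U_{GL_k}, u_2 ∈ U_{SO_{2(l-k)}}}`. -/
def inSkPlus (F : Type*) [Field F] (l k : ℕ)
    (g : Matrix (Fin (2*l)) (Fin (2*l)) F) : Prop :=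
  inSO F (2*l) g ∧ isUUT F (2*l) g ∧
  ∀ i j : Fin (2*l), blk3 l k (i:ℕ) ≠ blk3 l k (j:ℕ) → g i j = 0


section Lemmas

variable {F : Type*} [Field F] {n : ℕ} {v : F → ℤ}

lemma Jmat_apply (i j : Fin n) : Jmat F n i j = if j = Fin.rev i then 1 else 0 := by
  have hi := i.isLt; have hj := j.isLt
  unfold Jmat; rw [Matrix.of_apply]
  by_cases h : j = Fin.rev i
  · subst h
    rw [if_pos rfl, if_pos (by rw [Fin.val_rev]; omega)]
  · rw [if_neg h, if_neg]
    intro hc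
    exact h (Fin.ext (by rw [Fin.val_rev]; omega))

lemma Jmul_apply (X : Matrix (Fin n) (Fin n) F) (i j : Fin n) :
    (Jmat F n * X) i j = X i.rev j := by
  rw [Matrix.mul_apply]
  simp [Jmat_apply, ite_mul]

lemma mulJ_apply (X : Matrix (Fin n) (Fin n) F) (i j : Fin n) :
    (X * Jmat F n) i j = X i j.rev := by
  rw [Matrix.mul_apply]
  have : ∀ p : Fin n, (j = Fin.rev p) = (p = Fin.rev j) := by
    intro p; apply propext
    constructor
    · rintro rfl; rw [Fin.rev_rev]
    · rintro rfl; rw [Fin.rev_rev]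
  simp [Jmat_apply, mul_ite, this]

lemma JXJ_apply (X : Matrix (Fin n) (Fin n) F) (i j : Fin n) :
    (Jmat F n * X * Jmat F n) i j = X i.rev j.rev := by
  rw [mulJ_apply, Jmul_apply]

lemma JJ : Jmat F n * Jmat F n = (1 : Matrix (Fin n) (Fin n) F) := by
  ext i j
  rw [Jmul_apply, Jmat_apply, Matrix.one_apply]
  simp [Fin.rev_rev, eq_comm]

lemma Jsymm : (Jmat F n)ᵀ = Jmat F n := by
  ext i j
  unfold Jmat
  simp only [Matrix.transpose_apply, Matrix.of_apply]
  rw [show (j:ℕ)+(i:ℕ)+1 = (i:ℕ)+(j:ℕ)+1 by omega]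

lemma Jcancel (X : Matrix (Fin n) (Fin n) F) : Jmat F n * (Jmat F n * X) = X := by
  rw [← mul_assoc, JJ, one_mul]

lemma inSO_mul {a b : Matrix (Fin n) (Fin n) F} (ha : inSO F n a) (hb : inSO F n b) :
    inSO F n (a*b) := by
  refine ⟨by rw [Matrix.det_mul, ha.1, hb.1, one_mul], ?_⟩
  rw [Matrix.transpose_mul]
  calc bᵀ * aᵀ * Jmat F n * (a * b) = bᵀ * (aᵀ * Jmat F n * a) * b := by
        simp only [mul_assoc]
    _ = bᵀ * Jmat F n * b := by rw [ha.2]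
    _ = Jmat F n := hb.2

lemma so_left_inv {g : Matrix (Fin n) (Fin n) F} (h : inSO F n g) :
    (Jmat F n * gᵀ * Jmat F n) * g = 1 := by
  calc Jmat F n * gᵀ * Jmat F n * g = Jmat F n * (gᵀ * Jmat F n * g) := by
        simp only [mul_assoc]
    _ = Jmat F n * Jmat F n := by rw [h.2]
    _ = 1 := JJ

lemma so_right_inv {g : Matrix (Fin n) (Fin n) F} (h : inSO F n g) :
    g * (Jmat F n * gᵀ * Jmat F n) = 1 :=
  mul_eq_one_comm.mpr (so_left_inv h)

lemma so_gJgt {g : Matrix (Fin n) (Fin n) F} (h : inSO F n g) :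
    g * Jmat F n * gᵀ = Jmat F n := by
  have h1 := so_right_inv h
  calc g * Jmat F n * gᵀ = g * Jmat F n * gᵀ * (Jmat F n * Jmat F n) := by
        rw [JJ, mul_one]
    _ = (g * (Jmat F n * gᵀ * Jmat F n)) * Jmat F n := by simp only [mul_assoc]
    _ = Jmat F n := by rw [h1, one_mul]

lemma inSO_JtJ {g : Matrix (Fin n) (Fin n) F} (h : inSO F n g) :
    inSO F n (Jmat F n * gᵀ * Jmat F n) := by
  constructor
  · have := congrArg Matrix.det (so_left_inv h)
    rw [Matrix.det_mul, h.1, mul_one, Matrix.det_one] at this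
    exact this
  · have hg := so_gJgt h
    calc (Jmat F n * gᵀ * Jmat F n)ᵀ * Jmat F n * (Jmat F n * gᵀ * Jmat F n)
        = (Jmat F n * (g * Jmat F n)) * Jmat F n * (Jmat F n * gᵀ * Jmat F n) := by
          simp only [Matrix.transpose_mul, Matrix.transpose_transpose, Jsymm, mul_assoc]
      _ = Jmat F n * (g * Jmat F n * gᵀ * Jmat F n) := by
          simp only [mul_assoc, Jcancel]
      _ = Jmat F n := by rw [hg, JJ, mul_one]



lemma pPow_zero (k : ℤ) : (0:F) ∈ pPow F v k := Or.inl rfl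

lemma v_one (hmul : ∀ x y : F, x ≠ 0 → y ≠ 0 → v (x*y) = v x + v y) : v (1:F) = 0 := by
  have := hmul 1 1 one_ne_zero one_ne_zero
  rw [mul_one] at this; omega

lemma pPow_one (hmul : ∀ x y : F, x ≠ 0 → y ≠ 0 → v (x*y) = v x + v y) :
    (1:F) ∈ pPow F v 0 := Or.inr ⟨one_ne_zero, by rw [v_one hmul]⟩

lemma pPow_mono {k k' : ℤ} (h : k' ≤ k) {x : F} (hx : x ∈ pPow F v k) : x ∈ pPow F v k' := by
  rcases hx with h0 | ⟨h1, h2⟩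
  · exact Or.inl h0
  · exact Or.inr ⟨h1, le_trans h h2⟩

lemma pPow_add (hadd : ∀ x y : F, x ≠ 0 → y ≠ 0 → x + y ≠ 0 → min (v x) (v y) ≤ v (x+y))
    {k : ℤ} {x y : F} (hx : x ∈ pPow F v k) (hy : y ∈ pPow F v k) : x + y ∈ pPow F v k := by
  rcases hx with rfl | ⟨hx0, hxv⟩
  · rwa [zero_add]
  rcases hy with rfl | ⟨hy0, hyv⟩
  · rw [add_zero]; exact Or.inr ⟨hx0, hxv⟩
  by_cases hxy : x + y = 0
  · exact Or.inl hxy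
  · exact Or.inr ⟨hxy, le_trans (le_min hxv hyv) (hadd x y hx0 hy0 hxy)⟩

lemma pPow_mul (hmul : ∀ x y : F, x ≠ 0 → y ≠ 0 → v (x*y) = v x + v y)
    {k1 k2 : ℤ} {x y : F} (hx : x ∈ pPow F v k1) (hy : y ∈ pPow F v k2) :
    x * y ∈ pPow F v (k1 + k2) := by
  rcases hx with rfl | ⟨hx0, hxv⟩
  · exact Or.inl (zero_mul y)
  rcases hy with rfl | ⟨hy0, hyv⟩
  · exact Or.inl (mul_zero x)
  exact Or.inr ⟨mul_ne_zero hx0 hy0, by rw [hmul x y hx0 hy0]; omega⟩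

lemma pPow_sum (hadd : ∀ x y : F, x ≠ 0 → y ≠ 0 → x + y ≠ 0 → min (v x) (v y) ≤ v (x+y))
    {k : ℤ} {ι : Type*} (s : Finset ι) (f : ι → F) (h : ∀ i ∈ s, f i ∈ pPow F v k) :
    (∑ i ∈ s, f i) ∈ pPow F v k :=
  Finset.sum_induction f (· ∈ pPow F v k) (fun _ _ ha hb => pPow_add hadd ha hb)
    (pPow_zero k) h

-- K_m lemmas

lemma inKm_mul (hmul : ∀ x y : F, x ≠ 0 → y ≠ 0 → v (x*y) = v x + v y)
    (hadd : ∀ x y : F, x ≠ 0 → y ≠ 0 → x + y ≠ 0 → min (v x) (v y) ≤ v (x+y))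
    {l m : ℕ} {a b : Matrix (Fin (2*l)) (Fin (2*l)) F}
    (ha : inKm F v l m a) (hb : inKm F v l m b) : inKm F v l m (a * b) := by
  refine ⟨inSO_mul ha.1 hb.1, ?_⟩
  intro i j
  have key : a * b - 1 = (a - 1) * b + (b - 1) := by noncomm_ring
  have hb0 : ∀ p q : Fin (2*l), b p q ∈ pPow F v 0 := by
    intro p q
    have : b p q = (b - 1) p q + (1 : Matrix (Fin (2*l)) (Fin (2*l)) F) p q := by
      simp [Matrix.sub_apply]
    rw [this]
    refine pPow_add hadd (pPow_mono (Int.ofNat_nonneg m) (hb.2 p q)) ?_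
    rw [Matrix.one_apply]
    split_ifs
    · exact pPow_one hmul
    · exact pPow_zero 0
  rw [key, Matrix.add_apply, Matrix.mul_apply]
  refine pPow_add hadd (pPow_sum hadd _ _ fun p _ => ?_) (hb.2 i j)
  have := pPow_mul hmul (ha.2 i p) (hb0 p j)
  rwa [add_zero] at this

lemma inKm_JtJ {l m : ℕ} {a : Matrix (Fin (2*l)) (Fin (2*l)) F}
    (ha : inKm F v l m a) : inKm F v l m (Jmat F (2*l) * aᵀ * Jmat F (2*l)) := by
  refine ⟨inSO_JtJ ha.1, ?_⟩
  intro i j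
  have : (Jmat F (2*l) * aᵀ * Jmat F (2*l) - 1) i j = (a - 1) j.rev i.rev := by
    rw [Matrix.sub_apply, Matrix.sub_apply, JXJ_apply, Matrix.transpose_apply,
      Matrix.one_apply, Matrix.one_apply]
    congr 1
    simp [Fin.rev_inj, eq_comm]
  rw [this]
  exact ha.2 _ _

-- emDiag lemmas

lemma emDiag_mul_inv (hw : (ϖ : F) ≠ 0) (l m : ℕ) :
    emDiag F ϖ l m * emDiagInv F ϖ l m = 1 := by
  unfold emDiag emDiagInv
  rw [Matrix.diagonal_mul_diagonal]
  have : ∀ i : Fin (2*l),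
      ((if (i:ℕ) < l then ϖ ^ (-(2*(m:ℤ)*((l:ℤ)-1-((i:ℕ):ℤ))))
        else ϖ ^ (2*(m:ℤ)*(((i:ℕ):ℤ)-(l:ℤ)))) *
       (if (i:ℕ) < l then ϖ ^ (2*(m:ℤ)*((l:ℤ)-1-((i:ℕ):ℤ)))
        else ϖ ^ (-(2*(m:ℤ)*(((i:ℕ):ℤ)-(l:ℤ)))))) = 1 := by
    intro i
    split_ifs <;> rw [← zpow_add₀ hw] <;> simp
  rw [show (fun i : Fin (2*l) =>
      ((if (i:ℕ) < l then ϖ ^ (-(2*(m:ℤ)*((l:ℤ)-1-((i:ℕ):ℤ))))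
        else ϖ ^ (2*(m:ℤ)*(((i:ℕ):ℤ)-(l:ℤ)))) *
       (if (i:ℕ) < l then ϖ ^ (2*(m:ℤ)*((l:ℤ)-1-((i:ℕ):ℤ)))
        else ϖ ^ (-(2*(m:ℤ)*(((i:ℕ):ℤ)-(l:ℤ))))))) = fun _ => (1:F) from funext this,
    Matrix.diagonal_one]

lemma emDiagInv_mul (hw : (ϖ : F) ≠ 0) (l m : ℕ) :
    emDiagInv F ϖ l m * emDiag F ϖ l m = 1 :=
  mul_eq_one_comm.mp (emDiag_mul_inv hw l m)

lemma inHm_mul {ϖ : F} (hw : ϖ ≠ 0)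
    (hmul : ∀ x y : F, x ≠ 0 → y ≠ 0 → v (x*y) = v x + v y)
    (hadd : ∀ x y : F, x ≠ 0 → y ≠ 0 → x + y ≠ 0 → min (v x) (v y) ≤ v (x+y))
    {l m : ℕ} {g h : Matrix (Fin (2*l)) (Fin (2*l)) F}
    (hg : inHm F v ϖ l m g) (hh : inHm F v ϖ l m h) : inHm F v ϖ l m (g * h) := by
  obtain ⟨a, ha, rfl⟩ := hg
  obtain ⟨b, hb, rfl⟩ := hh
  refine ⟨a * b, inKm_mul hmul hadd ha hb, ?_⟩
  have hc : emDiagInv F ϖ l m * (emDiag F ϖ l m * (b * emDiagInv F ϖ l m))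
      = b * emDiagInv F ϖ l m := by
    rw [← mul_assoc, emDiagInv_mul hw, one_mul]
  simp only [mul_assoc, hc]

lemma JeJ :
    Jmat F (2*l) * emDiag F ϖ l m * Jmat F (2*l) = emDiagInv F ϖ l m := by
  ext i j
  rw [JXJ_apply]
  unfold emDiag emDiagInv
  rw [Matrix.diagonal_apply, Matrix.diagonal_apply]
  by_cases h : i = j
  · subst h
    rw [if_pos rfl, if_pos rfl]
    have hi := i.isLt
    have hrev : ((Fin.rev i : Fin (2*l)) : ℕ) = 2*l - (i+1) := Fin.val_rev i
    by_cases hil : (i:ℕ) < l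
    · rw [if_neg (by omega), if_pos hil,
        show (((Fin.rev i : Fin (2*l)) : ℕ) : ℤ) - (l:ℤ) = (l:ℤ)-1-((i:ℕ):ℤ) by omega]
    · rw [if_pos (by omega), if_neg hil,
        show (l:ℤ)-1-(((Fin.rev i : Fin (2*l)) : ℕ) : ℤ) = ((i:ℕ):ℤ)-(l:ℤ) by omega]
  · rw [if_neg (fun hc => h (Fin.rev_inj.mp hc)), if_neg h]

lemma JeinvJ {ϖ : F} {l m : ℕ} :
    Jmat F (2*l) * emDiagInv F ϖ l m * Jmat F (2*l) = emDiag F ϖ l m := by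
  rw [← JeJ (ϖ := ϖ) (l := l) (m := m)]
  simp only [mul_assoc, Jcancel, JJ, mul_one]

lemma inHm_JtJ {ϖ : F} {l m : ℕ} {g : Matrix (Fin (2*l)) (Fin (2*l)) F}
    (hg : inHm F v ϖ l m g) :
    inHm F v ϖ l m (Jmat F (2*l) * gᵀ * Jmat F (2*l)) := by
  obtain ⟨a, ha, rfl⟩ := hg
  refine ⟨Jmat F (2*l) * aᵀ * Jmat F (2*l), inKm_JtJ ha, ?_⟩
  have h1 : (emDiag F ϖ l m)ᵀ = emDiag F ϖ l m := Matrix.diagonal_transpose _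
  have h2 : (emDiagInv F ϖ l m)ᵀ = emDiagInv F ϖ l m := Matrix.diagonal_transpose _
  have ht : (emDiag F ϖ l m * a * emDiagInv F ϖ l m)ᵀ
      = emDiagInv F ϖ l m * aᵀ * emDiag F ϖ l m := by
    rw [Matrix.transpose_mul, Matrix.transpose_mul, h1, h2, mul_assoc]
  rw [ht]
  calc Jmat F (2*l) * (emDiagInv F ϖ l m * aᵀ * emDiag F ϖ l m) * Jmat F (2*l)
      = (Jmat F (2*l) * emDiagInv F ϖ l m * Jmat F (2*l)) *
        (Jmat F (2*l) * aᵀ * Jmat F (2*l)) *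
        (Jmat F (2*l) * emDiag F ϖ l m * Jmat F (2*l)) := by
        simp only [mul_assoc, Jcancel]
    _ = emDiag F ϖ l m * (Jmat F (2*l) * aᵀ * Jmat F (2*l)) * emDiagInv F ϖ l m := by
        rw [JeinvJ, JeJ]

-- blk3 lemmas

lemma strip_iff {l k : ℕ} (hkl : k ≤ l) {i j : ℕ} (hi : i < 2*l) (hj : j < 2*l) :
    ((i < k ∧ k ≤ j) ∨ (i < 2*l-k ∧ 2*l-k ≤ j)) ↔ blk3 l k i < blk3 l k j := by
  unfold blk3
  split_ifs <;> omega

lemma blk3_lt (l k x : ℕ) : blk3 l k x < 3 := by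
  unfold blk3; split_ifs <;> omega

lemma blk3_rev {l k : ℕ} (hkl : k ≤ l) {x : ℕ} (hx : x < 2*l) :
    blk3 l k (2*l - (x+1)) = 2 - blk3 l k x := by
  unfold blk3; split_ifs <;> omega

end Lemmas

/-- conjugation by elements of `S_k^+ ∩ U_m` preserves the complement
`N_k ∖ (N_k ∩ U_m)`. -/
theorem statement18 (F : Type*) [Field F] (v : F → ℤ) (ϖ : F)
    (hϖ0 : ϖ ≠ 0) (hϖ : v ϖ = 1)
    (hmul : ∀ x y : F, x ≠ 0 → y ≠ 0 → v (x*y) = v x + v y)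
    (hadd : ∀ x y : F, x ≠ 0 → y ≠ 0 → x + y ≠ 0 → min (v x) (v y) ≤ v (x+y))
    (l k m : ℕ) (hk : 1 ≤ k) (hkl : k ≤ l) (hm : 1 ≤ m) :
    ∀ uplus u0 : Matrix (Fin (2*l)) (Fin (2*l)) F,
      inSkPlus F l k uplus → inUm F v ϖ l m uplus →
      inNk F l k u0 → ¬ inUm F v ϖ l m u0 →
      inNk F l k (uplus⁻¹ * u0 * uplus) ∧ ¬ inUm F v ϖ l m (uplus⁻¹ * u0 * uplus) := by
  intro A u0 hSk hAUm hN hnotUm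
  obtain ⟨hASO, hAuut, hABD⟩ := hSk
  set J : Matrix (Fin (2*l)) (Fin (2*l)) F := Jmat F (2*l) with hJ
  set Ainv : Matrix (Fin (2*l)) (Fin (2*l)) F := J * Aᵀ * J with hAinvdef
  have hLI : Ainv * A = 1 := so_left_inv hASO
  have hRI : A * Ainv = 1 := so_right_inv hASO
  have hInv : A⁻¹ = Ainv := Matrix.inv_eq_left_inv hLI
  rw [hInv]
  -- block-diagonality of Ainv
  have hAinvBD : ∀ i j : Fin (2*l), blk3 l k (i:ℕ) ≠ blk3 l k (j:ℕ) → Ainv i j = 0 := by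
    intro i j hij
    rw [hAinvdef, JXJ_apply, Matrix.transpose_apply]
    apply hABD
    rw [Fin.val_rev, Fin.val_rev, blk3_rev hkl j.isLt, blk3_rev hkl i.isLt]
    have h1 := blk3_lt l k (i:ℕ)
    have h2 := blk3_lt l k (j:ℕ)
    omega
  -- part 1
  have hpart1 : inNk F l k (Ainv * u0 * A) := by
    refine ⟨inSO_mul (inSO_mul (inSO_JtJ hASO) hN.1) hASO, ?_⟩
    intro i j hns
    have hbij : ¬ (blk3 l k (i:ℕ) < blk3 l k (j:ℕ)) := by
      rw [← strip_iff hkl i.isLt j.isLt]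
      exact hns
    calc (Ainv * u0 * A) i j
        = ∑ q : Fin (2*l), (∑ p : Fin (2*l), Ainv i p * u0 p q) * A q j := by
          rw [Matrix.mul_apply]
          exact Finset.sum_congr rfl fun q _ => by rw [Matrix.mul_apply]
      _ = ∑ q : Fin (2*l), (∑ p : Fin (2*l),
            Ainv i p * (if p = q then 1 else 0)) * A q j := by
          refine Finset.sum_congr rfl fun q _ => ?_
          by_cases h2 : blk3 l k (q:ℕ) = blk3 l k (j:ℕ)
          · congr 1
            refine Finset.sum_congr rfl fun p _ => ?_
            by_cases h1 : blk3 l k (p:ℕ) = blk3 l k (i:ℕ)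
            · congr 1
              apply hN.2
              rw [strip_iff hkl p.isLt q.isLt, h1, h2]
              exact hbij
            · rw [hAinvBD i p (fun h => h1 h.symm), zero_mul, zero_mul]
          · rw [hABD q j h2, mul_zero, mul_zero]
      _ = ∑ q : Fin (2*l), Ainv i q * A q j := by
          refine Finset.sum_congr rfl fun q _ => ?_
          congr 1
          simp [mul_ite]
      _ = (Ainv * A) i j := (Matrix.mul_apply).symm
      _ = (1 : Matrix (Fin (2*l)) (Fin (2*l)) F) i j := by rw [hLI]
      _ = if i = j then 1 else 0 := Matrix.one_apply
  refine ⟨hpart1, ?_⟩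
  -- part 2
  intro hwUm
  apply hnotUm
  constructor
  · -- u0 ∈ U
    refine ⟨hN.1, fun i => ?_, fun i j hji => ?_⟩
    · rw [hN.2 i i (by omega), if_pos rfl]
    · rw [hN.2 i j (by omega), if_neg]
      intro h
      rw [h] at hji
      omega
  · -- u0 ∈ H_m
    have hrec : A * (Ainv * u0 * A) * Ainv = u0 := by
      calc A * (Ainv * u0 * A) * Ainv = A * Ainv * u0 * (A * Ainv) := by
            simp only [mul_assoc]
        _ = u0 := by rw [hRI, one_mul, mul_one]
    rw [← hrec]
    exact inHm_mul hϖ0 hmul hadd (inHm_mul hϖ0 hmul hadd hAUm.2 hwUm.2)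
      (inHm_JtJ hAUm.2)

end
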